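/- The function U(x) = cosh(x) − sinh(x)/x is positive and strictly increasing on (0, ∞), and satisfies U(x) < e^x / 2 for all x > 0. -/

import Mathlib

open Real

/-- `U(x) = cosh x - sinh x / x`. -/
noncomputable def radeU (x : ℝ) : ℝ := Real.cosh x - Real.sinh x / x

lemma radeU_aux1 (x : ℝ) (hx : 0 < x) : Real.sinh x < x * Real.cosh x := by
  have hd : ∀ y : ℝ, HasDerivAt (fun y => y * Real.cosh y - Real.sinh y) (y * Real.sinh y) y := by
    intro y
    have := ((hasDerivAt_id y).mul (Real.hasDerivAt_cosh y)).sub (Real.hasDerivAt_sinh y)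
    refine this.congr_deriv ?_
    simp only [id]
    ring
  have hmono : StrictMonoOn (fun y => y * Real.cosh y - Real.sinh y) (Set.Ici 0) := by
    apply strictMonoOn_of_deriv_pos (convex_Ici 0)
    · exact Continuous.continuousOn (by continuity)
    · intro y hy
      rw [interior_Ici] at hy
      rw [(hd y).deriv]
      exact mul_pos hy (Real.sinh_pos_iff.mpr hy)
  have := hmono (Set.self_mem_Ici) (Set.mem_Ici.mpr hx.le) hx
  simpa using this

lemma radeU_aux2 (x : ℝ) (hx : 0 < x) :
    0 < (x^2 + 1) * Real.sinh x - x * Real.cosh x := by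
  have hd : ∀ y : ℝ, HasDerivAt (fun y => (y^2 + 1) * Real.sinh y - y * Real.cosh y)
      (y * Real.sinh y + y^2 * Real.cosh y) y := by
    intro y
    have h1 : HasDerivAt (fun y : ℝ => y^2 + 1) (2*y) y := by
      simpa using ((hasDerivAt_pow 2 y).add_const 1)
    have := (h1.mul (Real.hasDerivAt_sinh y)).sub ((hasDerivAt_id y).mul (Real.hasDerivAt_cosh y))
    refine this.congr_deriv ?_
    simp only [id]
    ring
  have hmono : StrictMonoOn (fun y => (y^2 + 1) * Real.sinh y - y * Real.cosh y) (Set.Ici 0) := by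
    apply strictMonoOn_of_deriv_pos (convex_Ici 0)
    · exact Continuous.continuousOn (by continuity)
    · intro y hy
      rw [interior_Ici] at hy
      rw [(hd y).deriv]
      have h1 : 0 < y * Real.sinh y := mul_pos hy (Real.sinh_pos_iff.mpr hy)
      have h2 : 0 < y^2 * Real.cosh y := mul_pos (pow_pos hy 2) (Real.cosh_pos y)
      linarith
  have := hmono (Set.self_mem_Ici) (Set.mem_Ici.mpr hx.le) hx
  simpa using this

theorem radeU_pos_strictMono_lt :
    (∀ x : ℝ, 0 < x → 0 < radeU x) ∧
    StrictMonoOn radeU (Set.Ioi 0) ∧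
    ∀ x : ℝ, 0 < x → radeU x < Real.exp x / 2 := by
  refine ⟨?_, ?_, ?_⟩
  · intro x hx
    have h := radeU_aux1 x hx
    unfold radeU
    rw [sub_pos, div_lt_iff₀ hx]
    linarith
  · apply strictMonoOn_of_deriv_pos (convex_Ioi 0)
    · exact (Real.continuous_cosh.continuousOn.sub
        (Real.continuous_sinh.continuousOn.div continuousOn_id
          (fun x hx => ne_of_gt hx)))
    · intro x hx
      rw [interior_Ioi] at hx
      have h1 : HasDerivAt (fun y => Real.sinh y / y)
          ((Real.cosh x * x - Real.sinh x * 1) / x^2) x :=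
        (Real.hasDerivAt_sinh x).div (hasDerivAt_id x) hx.ne'
      have h2 : HasDerivAt radeU
          (Real.sinh x - (Real.cosh x * x - Real.sinh x * 1) / x^2) x :=
        (Real.hasDerivAt_cosh x).sub h1
      rw [h2.deriv, sub_pos, div_lt_iff₀ (pow_pos hx 2)]
      nlinarith [radeU_aux2 x hx]
  · intro x hx
    have hb : 0 < Real.exp (-x) := Real.exp_pos _
    have ha : 0 < Real.exp x := Real.exp_pos _
    have hab : Real.exp x * Real.exp (-x) = 1 := by rw [← Real.exp_add]; simp
    have h2 : 2*x + 1 < Real.exp x * Real.exp x := by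
      calc 2*x + 1 < Real.exp (2*x) := Real.add_one_lt_exp (by positivity)
        _ = Real.exp x * Real.exp x := by rw [← Real.exp_add]; ring_nf
    have key : Real.exp (-x) / 2 < Real.sinh x / x := by
      rw [Real.sinh_eq, lt_div_iff₀ hx]
      nlinarith [mul_pos hb hb, mul_pos (mul_pos hb hb) hx, mul_pos hb hx]
    unfold radeU
    rw [Real.cosh_eq]
    linarith
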